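/- arXiv:0808.2181 — 2 statements merged into one kernel-verified Lean document; each statement's English description precedes it below -/
import Mathlib

section
/- Let λ_b > 0. If Z is a nonnegative random variable with cumulative distribution function P(Z ≤ z) = 1 − exp(−4π λ_b z²) for z ≥ 0, and conditioned on Z = z the random variable D has conditional CDF P(D ≤ t | Z = z) = min(t²/z², 1) for t ≥ 0, then the density of D is f_D(t) = −8π λ_b t · Ei(−4π λ_b t²), where Ei(x) = ∫_{−∞}^{x} e^{u}/u du is the exponential integral. -/
open Real MeasureTheory

noncomputable def Ei (x : ℝ) : ℝ := ∫ u in Set.Iic x, Real.exp u / u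

lemma aux_int_exp (a : ℝ) (ha : 0 < a) :
    MeasureTheory.Integrable (fun z : ℝ => Real.exp (-(a * z ^ 2))) := by
  have := integrable_exp_neg_mul_sq ha
  simpa [neg_mul] using this

lemma aux_intOn (a s : ℝ) (ha : 0 < a) (hs : 0 < s) :
    MeasureTheory.IntegrableOn (fun z : ℝ => Real.exp (-(a * z ^ 2)) / z) (Set.Ioi s) := by
  have h1 : MeasureTheory.IntegrableOn (fun z : ℝ => Real.exp (-(a * z ^ 2)) / s)
      (Set.Ioi s) := ((aux_int_exp a ha).div_const s).integrableOn
  refine MeasureTheory.Integrable.mono h1 ?_ ?_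
  · apply ContinuousOn.aestronglyMeasurable ?_ measurableSet_Ioi
    apply ContinuousOn.div (Continuous.continuousOn (by continuity)) continuousOn_id
    intro z hz; exact ne_of_gt (lt_trans hs hz)
  · filter_upwards [ae_restrict_mem measurableSet_Ioi] with z hz
    have hz0 : 0 < z := lt_trans hs hz
    rw [Real.norm_eq_abs, Real.norm_eq_abs, abs_div, abs_div,
      abs_of_pos hz0, abs_of_pos hs]
    exact div_le_div_of_nonneg_left (abs_nonneg _) hs (le_of_lt hz)

lemma aux_image (a t : ℝ) (ha : 0 < a) (ht : 0 < t) :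
    (fun z : ℝ => -(a * z ^ 2)) '' Set.Ioi t = Set.Iio (-(a * t ^ 2)) := by
  ext u
  constructor
  · rintro ⟨z, hz, rfl⟩
    have hz' : t < z := hz
    have : t ^ 2 < z ^ 2 := by nlinarith
    simp only [Set.mem_Iio]
    nlinarith
  · intro hu
    simp only [Set.mem_Iio] at hu
    refine ⟨Real.sqrt (-u / a), ?_, ?_⟩
    · have h1 : t ^ 2 < -u / a := by
        rw [lt_div_iff₀ ha]; nlinarith
      have := Real.sqrt_lt_sqrt (by positivity) h1
      rwa [Real.sqrt_sq ht.le] at this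
    · have h0 : 0 ≤ -u / a := by
        apply div_nonneg _ ha.le
        nlinarith
      simp only
      rw [Real.sq_sqrt h0]
      field_simp

lemma aux_cov (a t : ℝ) (ha : 0 < a) (ht : 0 < t) :
    Ei (-(a * t ^ 2)) = -2 * ∫ z in Set.Ioi t, Real.exp (-(a * z ^ 2)) / z := by
  have hderiv : ∀ z ∈ Set.Ioi t, HasDerivWithinAt (fun z : ℝ => -(a * z ^ 2))
      (-(a * (2 * z))) (Set.Ioi t) z := by
    intro z _
    have h : HasDerivAt (fun x : ℝ => -(a * x ^ 2)) (-(a * (2 * z))) z := by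
      have h : HasDerivAt (fun x : ℝ => -(a * x ^ 2)) _ z := ((hasDerivAt_pow 2 z).const_mul a).neg
      convert h using 1
      push_cast; ring
    exact h.hasDerivWithinAt
  have hinj : Set.InjOn (fun z : ℝ => -(a * z ^ 2)) (Set.Ioi t) := by
    intro x hx y hy h
    simp only at h
    have hx0 : 0 < x := lt_trans ht hx
    have hy0 : 0 < y := lt_trans ht hy
    have hsq : x ^ 2 = y ^ 2 := by
      have := neg_injective h
      exact mul_left_cancel₀ ha.ne' this
    calc x = Real.sqrt (x ^ 2) := (Real.sqrt_sq hx0.le).symm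
    _ = Real.sqrt (y ^ 2) := by rw [hsq]
    _ = y := Real.sqrt_sq hy0.le
  have key := MeasureTheory.integral_image_eq_integral_abs_deriv_smul measurableSet_Ioi
    hderiv hinj (fun u => Real.exp u / u)
  rw [aux_image a t ha ht] at key
  have h1 : Ei (-(a * t ^ 2)) = ∫ u in Set.Iio (-(a * t ^ 2)), Real.exp u / u :=
    (MeasureTheory.setIntegral_congr_set Iio_ae_eq_Iic).symm
  rw [h1, key]
  have h2 : Set.EqOn (fun z => |(-(a * (2 * z)))| • (Real.exp (-(a * z ^ 2)) / (-(a * z ^ 2))))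
      (fun z => -2 * (Real.exp (-(a * z ^ 2)) / z)) (Set.Ioi t) := by
    intro z hz
    have hz0 : 0 < z := lt_trans ht hz
    have habs : |(-(a * (2 * z)))| = a * (2 * z) := by
      rw [abs_neg, abs_of_pos (by positivity)]
    simp only [habs, smul_eq_mul]
    field_simp
  rw [MeasureTheory.setIntegral_congr_fun measurableSet_Ioi h2,
    MeasureTheory.integral_const_mul]

lemma aux_contOn (a : ℝ) : ContinuousOn (fun z : ℝ => 2 * a * (Real.exp (-(a * z ^ 2)) / z))
    (Set.Ioi 0) := by
  apply ContinuousOn.mul continuousOn_const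
  apply ContinuousOn.div (Continuous.continuousOn (by continuity)) continuousOn_id
  intro z hz; exact ne_of_gt hz

lemma aux_ftc (a s : ℝ) (ha : 0 < a) (hs : 0 ≤ s) :
    ∫ z in Set.Ioc 0 s, 2 * a * z * Real.exp (-(a * z ^ 2)) = 1 - Real.exp (-(a * s ^ 2)) := by
  have h : ∀ z ∈ Set.uIcc 0 s, HasDerivAt (fun z : ℝ => -Real.exp (-(a * z ^ 2)))
      (2 * a * z * Real.exp (-(a * z ^ 2))) z := by
    intro z _
    have h1 : HasDerivAt (fun z : ℝ => -(a * z ^ 2)) (-(a * (2 * z))) z := by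
      have h : HasDerivAt (fun x : ℝ => -(a * x ^ 2)) _ z := ((hasDerivAt_pow 2 z).const_mul a).neg
      convert h using 1; push_cast; ring
    have h2 : HasDerivAt (fun x : ℝ => -Real.exp (-(a * x ^ 2))) _ z := h1.exp.neg
    convert h2 using 1; ring
  have hcont : Continuous (fun z : ℝ => 2 * a * z * Real.exp (-(a * z ^ 2))) := by continuity
  have hkey := intervalIntegral.integral_eq_sub_of_hasDerivAt h
    (hcont.intervalIntegrable 0 s)
  rw [intervalIntegral.integral_of_le hs] at hkey
  rw [hkey, show -(a * (0:ℝ) ^ 2) = 0 by ring, Real.exp_zero]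
  ring

lemma aux_Hderiv (a t : ℝ) (ha : 0 < a) (ht : 0 < t) :
    HasDerivAt (fun s => ∫ z in Set.Ioi s, 2 * a * (Real.exp (-(a * z ^ 2)) / z))
      (-(2 * a * (Real.exp (-(a * t ^ 2)) / t))) t := by
  set φ : ℝ → ℝ := fun z => 2 * a * (Real.exp (-(a * z ^ 2)) / z) with hφ
  have hφint : ∀ s : ℝ, 0 < s → MeasureTheory.IntegrableOn φ (Set.Ioi s) := by
    intro s hs
    exact (aux_intOn a s ha hs).const_mul _
  have ht2 : 0 < t / 2 := by positivity
  have heq : ∀ s ∈ Set.Ioi (t / 2),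
      (∫ z in Set.Ioi s, φ z)
        = (∫ z in Set.Ioi (t / 2), φ z) - ∫ u in (t / 2)..s, φ u := by
    intro s hs
    have hs2 : t / 2 < s := hs
    rw [intervalIntegral.integral_of_le hs2.le]
    have hu : Set.Ioc (t / 2) s ∪ Set.Ioi s = Set.Ioi (t / 2) :=
      Set.Ioc_union_Ioi_eq_Ioi hs2.le
    rw [← hu, MeasureTheory.setIntegral_union Set.Ioc_disjoint_Ioi_same measurableSet_Ioi
      ((hφint (t / 2) ht2).mono_set Set.Ioc_subset_Ioi_self)
      (hφint s (lt_trans ht2 hs2))]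
    ring
  have h1 : IntervalIntegrable φ volume (t / 2) t := by
    rw [intervalIntegrable_iff_integrableOn_Ioc_of_le (by linarith)]
    exact (hφint (t / 2) ht2).mono_set Set.Ioc_subset_Ioi_self
  have hmeas : StronglyMeasurableAtFilter φ (nhds t) volume :=
    (aux_contOn a).stronglyMeasurableAtFilter isOpen_Ioi t ht
  have h2 : ContinuousAt φ t :=
    (aux_contOn a).continuousAt (Ioi_mem_nhds ht)
  have hD := ((intervalIntegral.integral_hasDerivAt_right h1 hmeas h2).const_sub
    (∫ z in Set.Ioi (t / 2), φ z))
  refine hD.congr_of_eventuallyEq ?_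
  filter_upwards [Ioi_mem_nhds (show t / 2 < t by linarith)] with s hs
  exact heq s hs

lemma aux_split (a s : ℝ) (ha : 0 < a) (hs : 0 < s) :
    ∫ z in Set.Ioi (0 : ℝ), min (s ^ 2 / z ^ 2) 1 * (2 * a * z * Real.exp (-(a * z ^ 2)))
      = (1 - Real.exp (-(a * s ^ 2)))
        + s ^ 2 * ∫ z in Set.Ioi s, 2 * a * (Real.exp (-(a * z ^ 2)) / z) := by
  set g : ℝ → ℝ := fun z => min (s ^ 2 / z ^ 2) 1 * (2 * a * z * Real.exp (-(a * z ^ 2)))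
    with hg
  have heq1 : Set.EqOn g (fun z => 2 * a * z * Real.exp (-(a * z ^ 2))) (Set.Ioc 0 s) := by
    intro z hz
    have hz0 : 0 < z := hz.1
    have h1 : (1 : ℝ) ≤ s ^ 2 / z ^ 2 := by
      rw [le_div_iff₀ (by positivity)]
      nlinarith [hz.2]
    simp [hg, min_eq_right h1]
  have heq2 : Set.EqOn g (fun z => s ^ 2 * (2 * a * (Real.exp (-(a * z ^ 2)) / z)))
      (Set.Ioi s) := by
    intro z hz
    have hz0 : 0 < z := lt_trans hs hz
    have h1 : s ^ 2 / z ^ 2 ≤ 1 := by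
      rw [div_le_one (by positivity)]
      nlinarith [Set.mem_Ioi.mp hz]
    simp only [hg, min_eq_left h1]
    field_simp
  have hI1 : MeasureTheory.IntegrableOn g (Set.Ioc 0 s) := by
    apply MeasureTheory.IntegrableOn.congr_fun _ heq1.symm measurableSet_Ioc
    exact (Continuous.integrableOn_Ioc (by continuity))
  have hI2 : MeasureTheory.IntegrableOn g (Set.Ioi s) := by
    apply MeasureTheory.IntegrableOn.congr_fun _ heq2.symm measurableSet_Ioi
    exact (((aux_intOn a s ha hs).const_mul (2 * a)).const_mul (s ^ 2))
  have hu : Set.Ioc 0 s ∪ Set.Ioi s = Set.Ioi (0 : ℝ) := Set.Ioc_union_Ioi_eq_Ioi hs.le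
  rw [← hu, MeasureTheory.setIntegral_union Set.Ioc_disjoint_Ioi_same measurableSet_Ioi hI1 hI2,
    MeasureTheory.setIntegral_congr_fun measurableSet_Ioc heq1,
    MeasureTheory.setIntegral_congr_fun measurableSet_Ioi heq2,
    aux_ftc a s ha hs.le, MeasureTheory.integral_const_mul]

theorem stmt0 (lb : ℝ) (hlb : 0 < lb) (t : ℝ) (ht : 0 < t) :
    HasDerivAt (fun s : ℝ =>
        ∫ z in Set.Ioi (0 : ℝ),
          min (s ^ 2 / z ^ 2) 1 * (8 * π * lb * z * Real.exp (-(4 * π * lb * z ^ 2))))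
      (-(8 * π * lb * t) * Ei (-(4 * π * lb * t ^ 2))) t := by
  have hpi := Real.pi_pos
  set a : ℝ := 4 * π * lb with ha_def
  have ha : 0 < a := by positivity
  have hG : HasDerivAt (fun s : ℝ => (1 - Real.exp (-(a * s ^ 2)))
      + s ^ 2 * ∫ z in Set.Ioi s, 2 * a * (Real.exp (-(a * z ^ 2)) / z))
      (-(8 * π * lb * t) * Ei (-(a * t ^ 2))) t := by
    have hinner : HasDerivAt (fun s : ℝ => -(a * s ^ 2)) (-(a * (2 * t))) t := by
      have h : HasDerivAt (fun x : ℝ => -(a * x ^ 2)) _ t := ((hasDerivAt_pow 2 t).const_mul a).neg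
      convert h using 1; push_cast; ring
    have h1 : HasDerivAt (fun s : ℝ => 1 - Real.exp (-(a * s ^ 2)))
        (2 * a * t * Real.exp (-(a * t ^ 2))) t := by
      have h : HasDerivAt (fun s : ℝ => 1 - Real.exp (-(a * s ^ 2))) _ t := hinner.exp.const_sub 1
      convert h using 1; ring
    have h2 : HasDerivAt (fun s : ℝ => s ^ 2) (2 * t) t := by
      simpa using hasDerivAt_pow 2 t
    have h3 := aux_Hderiv a t ha ht
    have hmul := h2.mul h3
    have hsum : HasDerivAt (fun s : ℝ => (1 - Real.exp (-(a * s ^ 2)))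
        + s ^ 2 * ∫ z in Set.Ioi s, 2 * a * (Real.exp (-(a * z ^ 2)) / z)) _ t := h1.add hmul
    convert hsum using 1
    have hEi := aux_cov a t ha ht
    have hI : (∫ z in Set.Ioi t, Real.exp (-(a * z ^ 2)) / z) = Ei (-(a * t ^ 2)) / (-2) := by
      rw [hEi]; ring
    rw [MeasureTheory.integral_const_mul, hI, ha_def]
    field_simp
    ring
  refine hG.congr_of_eventuallyEq ?_
  filter_upwards [Ioi_mem_nhds ht] with s hs
  have h1 : ∫ z in Set.Ioi (0 : ℝ),
      min (s ^ 2 / z ^ 2) 1 * (8 * π * lb * z * Real.exp (-(4 * π * lb * z ^ 2)))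
      = ∫ z in Set.Ioi (0 : ℝ),
      min (s ^ 2 / z ^ 2) 1 * (2 * a * z * Real.exp (-(a * z ^ 2))) := by
    congr 1
    funext z
    rw [ha_def]
    ring_nf
  rw [h1, aux_split a s ha hs]
end

section
/- Let δ ∈ (0,1) and ζ, d, λ > 0 and w > 0 with (δ/(1−δ)) ζ d² w^{−δ} λ < 1. Define ξ = 1 − [(δ/(2−δ)) ζ d² w^{−δ} λ] / [1 − (δ/(1−δ)) ζ d² w^{−δ} λ]². Then as λ → 0⁺, the upper-bound outage probability P^u(λ) = 1 − ξ · exp(−ζ λ w^{−δ} d²) satisfies P^u(λ) = (2/(2−δ)) ζ w^{−δ} d² λ + O(λ²). -/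
open Real Asymptotics

lemma aux_bigO_sq (g : ℝ → ℝ) (hg : AnalyticAt ℝ g 0) (h0 : g 0 = 0) (h1 : deriv g 0 = 0) :
    g =O[nhds 0] fun x : ℝ => x ^ 2 := by
  obtain ⟨p, hp⟩ := hg
  have hO := hp.isBigO_sub_partialSum_pow 2
  have hps : ∀ y : ℝ, p.partialSum 2 y = 0 := by
    intro y
    have hd : p.coeff 1 = 0 := hp.deriv.symm.trans h1
    have hc0 : p.coeff 0 = 0 := by
      rw [FormalMultilinearSeries.coeff, hp.coeff_zero, h0]
    simp [FormalMultilinearSeries.partialSum, Finset.sum_range_succ, hd, hc0]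
  have : (fun y : ℝ => g y) =O[nhds 0] fun y : ℝ => ‖y‖ ^ 2 := by
    simpa [hps] using hO
  calc g =O[nhds 0] (fun y : ℝ => ‖y‖ ^ 2) := this
    _ =O[nhds 0] (fun y : ℝ => y ^ 2) := by
        apply Asymptotics.isBigO_of_le
        intro x; simp [abs_pow]

theorem stmt15 (δ ζ d w : ℝ) (hδ0 : 0 < δ) (hδ1 : δ < 1) (hζ : 0 < ζ) (hd : 0 < d)
    (hw : 0 < w) :
    (fun lam : ℝ =>
        (1 - (1 - δ / (2 - δ) * ζ * d ^ 2 * w ^ (-δ) * lam /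
              (1 - δ / (1 - δ) * ζ * d ^ 2 * w ^ (-δ) * lam) ^ 2) *
            Real.exp (-(ζ * lam * w ^ (-δ) * d ^ 2))) -
          2 / (2 - δ) * ζ * w ^ (-δ) * d ^ 2 * lam)
      =O[nhdsWithin 0 (Set.Ioi 0)] fun lam => lam ^ 2 := by
  have h2δ : (2:ℝ) - δ ≠ 0 := by linarith
  have h1δ : (1:ℝ) - δ ≠ 0 := by linarith
  set A : ℝ := δ / (2 - δ) * ζ * d ^ 2 * w ^ (-δ) with hA
  set B : ℝ := δ / (1 - δ) * ζ * d ^ 2 * w ^ (-δ) with hB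
  set D : ℝ := 2 / (2 - δ) * ζ * w ^ (-δ) * d ^ 2 with hD
  set f : ℝ → ℝ := fun lam =>
      (1 - (1 - A * lam / (1 - B * lam) ^ 2) *
          Real.exp (-(ζ * lam * w ^ (-δ) * d ^ 2))) - D * lam with hf
  have hana : AnalyticAt ℝ f 0 := by
    have hden : AnalyticAt ℝ (fun x : ℝ => (1 - B * x) ^ 2) 0 :=
      (analyticAt_const.sub (analyticAt_const.mul analyticAt_id)).pow 2
    have hnum : AnalyticAt ℝ (fun x : ℝ => A * x) 0 :=
      analyticAt_const.mul analyticAt_id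
    have hdiv : AnalyticAt ℝ (fun x : ℝ => A * x / (1 - B * x) ^ 2) 0 := by
      apply hnum.div hden
      norm_num
    have hexp : AnalyticAt ℝ (fun x : ℝ => Real.exp (-(ζ * x * w ^ (-δ) * d ^ 2))) 0 := by
      exact ((((analyticAt_const.mul analyticAt_id).mul
        analyticAt_const).mul analyticAt_const).neg).rexp
    exact (analyticAt_const.sub ((analyticAt_const.sub hdiv).mul hexp)).sub
      (analyticAt_const.mul analyticAt_id)
  have hf0 : f 0 = 0 := by simp [hf]
  have hder : HasDerivAt f (-((-A) * Real.exp (-(ζ * 0 * w ^ (-δ) * d ^ 2)) +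
      (1 - A * 0 / (1 - B * 0) ^ 2) *
        (Real.exp (-(ζ * 0 * w ^ (-δ) * d ^ 2)) * (-(ζ * w ^ (-δ) * d ^ 2)))) - D) 0 := by
    have hnum : HasDerivAt (fun x : ℝ => A * x) A 0 := by
      simpa using (hasDerivAt_id (0:ℝ)).const_mul A
    have hd1 : HasDerivAt (fun x : ℝ => 1 - B * x) (-B) 0 := by
      simpa [Pi.sub_def] using (hasDerivAt_const (0:ℝ) (1:ℝ)).sub ((hasDerivAt_id (0:ℝ)).const_mul B)
    have hden : HasDerivAt (fun x : ℝ => (1 - B * x) ^ 2)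
        (2 * (1 - B * 0) ^ 1 * (-B)) 0 := hd1.pow 2
    have hdiv : HasDerivAt (fun x : ℝ => A * x / (1 - B * x) ^ 2) A 0 := by
      have := hnum.div hden (by norm_num)
      convert this using 1
      · rfl
      · rfl
      · rfl
      · norm_num
    have harg : HasDerivAt (fun x : ℝ => -(ζ * x * w ^ (-δ) * d ^ 2))
        (-(ζ * w ^ (-δ) * d ^ 2)) 0 := by
      have : HasDerivAt (fun x : ℝ => ζ * x * w ^ (-δ) * d ^ 2) (ζ * w ^ (-δ) * d ^ 2) 0 := by
        have := ((hasDerivAt_id (0:ℝ)).const_mul ζ).mul_const (w ^ (-δ))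
        have := this.mul_const (d ^ 2)
        convert this using 2
        · rfl
        · rfl
        · rfl
        · ring
      exact this.neg
    have hexp := harg.exp
    have hu : HasDerivAt (fun x : ℝ => 1 - A * x / (1 - B * x) ^ 2) (-A) 0 := by
      simpa [Pi.sub_def] using (hasDerivAt_const (0:ℝ) (1:ℝ)).sub hdiv
    have hmul := hu.mul hexp
    have hDl : HasDerivAt (fun x : ℝ => D * x) D 0 := by
      simpa using (hasDerivAt_id (0:ℝ)).const_mul D
    have := ((hasDerivAt_const (0:ℝ) (1:ℝ)).sub hmul).sub hDl
    rw [hf]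
    convert this using 1
    · rfl
    · rfl
    · rfl
    · ring
  have hderiv0 : deriv f 0 = 0 := by
    rw [hder.deriv]
    simp only [mul_zero, zero_mul, zero_div, sub_zero, neg_zero, Real.exp_zero]
    rw [hA, hD]
    field_simp
    ring
  have := aux_bigO_sq f hana hf0 hderiv0
  exact this.mono nhdsWithin_le_nhds
end
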